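/- For every n ≥ 2, the probability p_n that two independently and uniformly chosen phylogenetic trees of size n are isomorphic (after removing labels) equals (n!/(2n-3)!!)² · Σ_{t ∈ U_n} (1/4)^{sym(t)}. -/

import Mathlib

open scoped Classical

/-- Plane binary trees: every node has outdegree 0 or 2. -/
inductive BT where
  | leaf : BT
  | node : BT → BT → BT

/-- Isomorphism of rooted binary trees with *unordered* children. -/
inductive Iso : BT → BT → Prop
  | leaf : Iso .leaf .leaf
  | node {a b c d} : Iso a c → Iso b d → Iso (.node a b) (.node c d)
  | swap {a b c d} : Iso a d → Iso b c → Iso (.node a b) (.node c d)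

theorem Iso.rfl : ∀ t, Iso t t
  | .leaf => .leaf
  | .node l r => .node (Iso.rfl l) (Iso.rfl r)

theorem Iso.symm' {a b : BT} (h : Iso a b) : Iso b a := by
  induction h with
  | leaf => exact .leaf
  | node h1 h2 ih1 ih2 => exact .node ih1 ih2
  | swap h1 h2 ih1 ih2 => exact .swap ih2 ih1

theorem Iso.trans' : ∀ {a b c : BT}, Iso a b → Iso b c → Iso a c := by
  intro a b c h1
  induction h1 generalizing c with
  | leaf => exact fun h2 => h2
  | node g1 g2 ih1 ih2 =>
      intro h2
      cases h2 with
      | node k1 k2 => exact .node (ih1 k1) (ih2 k2)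
      | swap k1 k2 => exact .swap (ih1 k1) (ih2 k2)
  | swap g1 g2 ih1 ih2 =>
      intro h2
      cases h2 with
      | node k1 k2 => exact .swap (ih1 k2) (ih2 k1)
      | swap k1 k2 => exact .node (ih1 k2) (ih2 k1)

instance btSetoid : Setoid BT :=
  ⟨Iso, ⟨Iso.rfl, Iso.symm', Iso.trans'⟩⟩

/-- Otter trees: isomorphism classes of unordered rooted binary trees. -/
def Otter : Type := Quotient btSetoid

/-- Number of leaves. -/
def leavesBT : BT → ℕ
  | .leaf => 1
  | .node l r => leavesBT l + leavesBT r

/-- Number of internal (binary) nodes. -/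
def internalsBT : BT → ℕ
  | .leaf => 0
  | .node l r => internalsBT l + internalsBT r + 1

/-- Number of symmetrical nodes: internal nodes whose two subtrees are isomorphic. -/
noncomputable def symBT : BT → ℕ
  | .leaf => 0
  | .node l r => symBT l + symBT r + (if Iso l r then 1 else 0)

theorem leaves_iso {a b : BT} (h : Iso a b) : leavesBT a = leavesBT b := by
  induction h with
  | leaf => rfl
  | node h1 h2 ih1 ih2 => simp [leavesBT, ih1, ih2]
  | swap h1 h2 ih1 ih2 => simp [leavesBT, ih1, ih2]; omega

theorem internals_iso {a b : BT} (h : Iso a b) : internalsBT a = internalsBT b := by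
  induction h with
  | leaf => rfl
  | node h1 h2 ih1 ih2 => simp [internalsBT, ih1, ih2]
  | swap h1 h2 ih1 ih2 => simp [internalsBT, ih1, ih2]; omega

theorem sym_iso {a b : BT} (h : Iso a b) : symBT a = symBT b := by
  induction h with
  | leaf => rfl
  | @node a b c d h1 h2 ih1 ih2 =>
      have hiff : Iso a b ↔ Iso c d :=
        ⟨fun hab => (h1.symm'.trans' hab).trans' h2,
         fun hcd => (h1.trans' hcd).trans' h2.symm'⟩
      simp only [symBT, ih1, ih2, if_congr hiff rfl rfl]
  | @swap a b c d h1 h2 ih1 ih2 =>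
      have hiff : Iso a b ↔ Iso c d :=
        ⟨fun hab => (h2.symm'.trans' hab.symm').trans' h1,
         fun hcd => (h1.trans' hcd.symm').trans' h2.symm'⟩
      simp only [symBT, ih1, ih2, if_congr hiff rfl rfl]
      omega

def Otter.leaves : Otter → ℕ := Quotient.lift leavesBT fun _ _ h => leaves_iso h
def Otter.internals : Otter → ℕ := Quotient.lift internalsBT fun _ _ h => internals_iso h
noncomputable def Otter.sym : Otter → ℕ := Quotient.lift symBT fun _ _ h => sym_iso h

/-- The set (as a type) of Otter trees with `n` leaves. -/
def OtterN (n : ℕ) : Type := {q : Otter // q.leaves = n}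

/-- Wedderburn–Etherington numbers: number of Otter trees with `n` leaves. -/
noncomputable def WE (n : ℕ) : ℕ := Nat.card (OtterN n)

/-- Binary trees with labeled leaves. -/
inductive LBT where
  | leaf : ℕ → LBT
  | node : LBT → LBT → LBT

/-- Label-preserving isomorphism with unordered children. -/
inductive LIso : LBT → LBT → Prop
  | leaf (k : ℕ) : LIso (.leaf k) (.leaf k)
  | node {a b c d} : LIso a c → LIso b d → LIso (.node a b) (.node c d)
  | swap {a b c d} : LIso a d → LIso b c → LIso (.node a b) (.node c d)

theorem LIso.rfl : ∀ t, LIso t t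
  | .leaf k => .leaf k
  | .node l r => .node (LIso.rfl l) (LIso.rfl r)

theorem LIso.symm' {a b : LBT} (h : LIso a b) : LIso b a := by
  induction h with
  | leaf k => exact .leaf k
  | node h1 h2 ih1 ih2 => exact .node ih1 ih2
  | swap h1 h2 ih1 ih2 => exact .swap ih2 ih1

theorem LIso.trans' : ∀ {a b c : LBT}, LIso a b → LIso b c → LIso a c := by
  intro a b c h1
  induction h1 generalizing c with
  | leaf k => exact fun h2 => h2
  | node g1 g2 ih1 ih2 =>
      intro h2
      cases h2 with
      | node k1 k2 => exact .node (ih1 k1) (ih2 k2)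
      | swap k1 k2 => exact .swap (ih1 k1) (ih2 k2)
  | swap g1 g2 ih1 ih2 =>
      intro h2
      cases h2 with
      | node k1 k2 => exact .swap (ih1 k2) (ih2 k1)
      | swap k1 k2 => exact .node (ih1 k2) (ih2 k1)

instance ltSetoid : Setoid LBT :=
  ⟨LIso, ⟨LIso.rfl, LIso.symm', LIso.trans'⟩⟩

/-- Labeled (phylogenetic-type) trees up to label-preserving isomorphism. -/
def LTree : Type := Quotient ltSetoid

/-- The multiset of leaf labels. -/
def labelsLT : LBT → Multiset ℕ
  | .leaf k => {k}
  | .node l r => labelsLT l + labelsLT r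

/-- The underlying unlabeled shape of a labeled tree. -/
def shapeLT : LBT → BT
  | .leaf _ => .leaf
  | .node l r => .node (shapeLT l) (shapeLT r)

theorem labels_iso {a b : LBT} (h : LIso a b) : labelsLT a = labelsLT b := by
  induction h with
  | leaf k => rfl
  | node h1 h2 ih1 ih2 => simp [labelsLT, ih1, ih2]
  | swap h1 h2 ih1 ih2 => simp [labelsLT, ih1, ih2]; exact add_comm _ _

theorem shape_iso {a b : LBT} (h : LIso a b) : Iso (shapeLT a) (shapeLT b) := by
  induction h with
  | leaf k => exact .leaf
  | node h1 h2 ih1 ih2 => exact .node ih1 ih2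
  | swap h1 h2 ih1 ih2 => exact .swap ih1 ih2

def LTree.labels : LTree → Multiset ℕ := Quotient.lift labelsLT fun _ _ h => labels_iso h

def LTree.shape : LTree → Otter :=
  Quotient.lift (fun t => (⟦shapeLT t⟧ : Otter)) fun _ _ h => Quotient.sound (shape_iso h)

/-- Phylogenetic trees of size `n`: labeled trees whose leaf labels are exactly `1, …, n`. -/
def Phylo (n : ℕ) : Type := {q : LTree // q.labels = (Finset.Icc 1 n).val}

/-- The number of phylogenetic trees of size `n`. -/
noncomputable def phyloCount (n : ℕ) : ℕ := Nat.card (Phylo n)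

/-- The double factorial `n!! = n·(n-2)·(n-4)···`. -/
def doubleFac : ℕ → ℕ
  | 0 => 1
  | 1 => 1
  | (n+2) => (n+2) * doubleFac n

/-- The probability that two independent uniformly random phylogenetic trees of
size `n` are isomorphic (have the same shape). -/
noncomputable def pIso (n : ℕ) : ℚ :=
  (Nat.card {pp : Phylo n × Phylo n // pp.1.1.shape = pp.2.1.shape} : ℚ)
    / (Nat.card (Phylo n) : ℚ) ^ 2

deriving instance DecidableEq for BT
deriving instance DecidableEq for LBT

/-- Injective encoding of plane binary trees. -/
def enc : BT → ℕ
  | .leaf => 0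
  | .node l r => Nat.pair (enc l) (enc r) + 1

theorem enc_inj : ∀ a b : BT, enc a = enc b → a = b
  | .leaf, .leaf, _ => rfl
  | .leaf, .node _ _, h => by simp [enc] at h
  | .node _ _, .leaf, h => by simp [enc] at h
  | .node l r, .node l' r', h => by
      simp only [enc, Nat.add_right_cancel_iff, Nat.pair_eq_pair] at h
      rw [enc_inj _ _ h.1, enc_inj _ _ h.2]

/-- Canonical form of a plane binary tree. -/
def normBT : BT → BT
  | .leaf => .leaf
  | .node l r =>
      let l' := normBT l
      let r' := normBT r
      if enc l' ≤ enc r' then .node l' r' else .node r' l'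

theorem iso_normBT (t : BT) : Iso t (normBT t) := by
  induction t with
  | leaf => exact .leaf
  | node l r ihl ihr =>
      simp only [normBT]
      split
      · exact .node ihl ihr
      · exact .swap ihl ihr

theorem normBT_eq_of_iso {a b : BT} (h : Iso a b) : normBT a = normBT b := by
  induction h with
  | leaf => rfl
  | node h1 h2 ih1 ih2 => simp only [normBT, ih1, ih2]
  | @swap a b c d h1 h2 ih1 ih2 =>
      simp only [normBT]
      rcases lt_trichotomy (enc (normBT a)) (enc (normBT b)) with hlt | heq | hgt
      · rw [if_pos hlt.le, if_neg (by rw [← ih1, ← ih2]; omega), ih1, ih2]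
      · have hab : normBT a = normBT b := enc_inj _ _ heq
        rw [if_pos heq.le, ← ih2, ← ih1, hab]
        simp
      · rw [if_neg (by omega), if_pos (by rw [← ih1, ← ih2]; omega), ih1, ih2]

theorem iso_iff_normBT {a b : BT} : Iso a b ↔ normBT a = normBT b :=
  ⟨normBT_eq_of_iso, fun h => ((iso_normBT a).trans' (h ▸ Iso.rfl _)).trans' (iso_normBT b).symm'⟩

theorem normBT_idem (t : BT) : normBT (normBT t) = normBT t :=
  (normBT_eq_of_iso (iso_normBT t)).symm

theorem leaves_normBT (t : BT) : leavesBT (normBT t) = leavesBT t :=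
  (leaves_iso (iso_normBT t)).symm

theorem normBT_node_fix {a b : BT} (h : normBT (.node a b) = .node a b) :
    normBT a = a ∧ normBT b = b ∧ enc a ≤ enc b := by
  simp only [normBT] at h
  split at h
  · rename_i hc
    injection h with h1 h2
    rw [h1, h2] at hc
    exact ⟨h1, h2, hc⟩
  · rename_i hc
    injection h with h1 h2
    exfalso
    have hba : b = a := by
      calc b = normBT a := h2.symm
        _ = normBT (normBT a) := (normBT_idem a).symm
        _ = normBT b := by rw [h2]
        _ = a := h1
    rw [h1, h2, hba] at hc
    exact hc le_rfl
/-- Injective encoding of labeled plane binary trees. -/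
def encL : LBT → ℕ
  | .leaf k => 2 * k
  | .node l r => 2 * Nat.pair (encL l) (encL r) + 1

theorem encL_inj : ∀ a b : LBT, encL a = encL b → a = b
  | .leaf j, .leaf k, h => by
      simp only [encL] at h
      have : j = k := by omega
      rw [this]
  | .leaf _, .node _ _, h => by simp only [encL] at h; omega
  | .node _ _, .leaf _, h => by simp only [encL] at h; omega
  | .node l r, .node l' r', h => by
      simp only [encL] at h
      have h2 : Nat.pair (encL l) (encL r) = Nat.pair (encL l') (encL r') := by omega
      rw [Nat.pair_eq_pair] at h2
      rw [encL_inj _ _ h2.1, encL_inj _ _ h2.2]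

/-- Shape key of a labeled tree: the encoding of its normalized shape. -/
def skey (t : LBT) : ℕ := enc (normBT (shapeLT t))

/-- Comparison on labeled trees: shape key first, then full encoding. -/
def cmpL (a b : LBT) : Prop := skey a < skey b ∨ (skey a = skey b ∧ encL a ≤ encL b)

instance : DecidablePred fun p : LBT × LBT => cmpL p.1 p.2 := fun _ => by
  unfold cmpL; infer_instance

instance (a b : LBT) : Decidable (cmpL a b) := by unfold cmpL; infer_instance

theorem cmpL_total (a b : LBT) : cmpL a b ∨ cmpL b a := by
  unfold cmpL; omega

theorem cmpL_refl (a : LBT) : cmpL a a := Or.inr ⟨rfl, le_rfl⟩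

theorem cmpL_antisymm {a b : LBT} (h1 : cmpL a b) (h2 : cmpL b a) : a = b := by
  apply encL_inj; unfold cmpL at h1 h2; omega

/-- Canonical form of a labeled tree (with respect to label-preserving iso). -/
def normL : LBT → LBT
  | .leaf k => .leaf k
  | .node l r =>
      let l' := normL l
      let r' := normL r
      if cmpL l' r' then .node l' r' else .node r' l'

theorem liso_normL (t : LBT) : LIso t (normL t) := by
  induction t with
  | leaf k => exact .leaf k
  | node l r ihl ihr =>
      simp only [normL]
      split
      · exact .node ihl ihr
      · exact .swap ihl ihr

theorem normL_eq_of_liso {a b : LBT} (h : LIso a b) : normL a = normL b := by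
  induction h with
  | leaf => rfl
  | node h1 h2 ih1 ih2 => simp only [normL, ih1, ih2]
  | @swap a b c d h1 h2 ih1 ih2 =>
      simp only [normL]
      by_cases heq : normL a = normL b
      · rw [heq, ← ih1, ← ih2, heq]
      · rcases cmpL_total (normL a) (normL b) with hab | hba
        · have hnb : ¬ cmpL (normL b) (normL a) := fun h' => heq (cmpL_antisymm hab h')
          rw [if_pos hab, if_neg (by rw [← ih1, ← ih2]; exact hnb), ih1, ih2]
        · have hna : ¬ cmpL (normL a) (normL b) := fun h' => heq (cmpL_antisymm h' hba)
          rw [if_neg hna, if_pos (by rw [← ih1, ← ih2]; exact hba), ih1, ih2]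

theorem liso_iff_normL {a b : LBT} : LIso a b ↔ normL a = normL b :=
  ⟨normL_eq_of_liso, fun h => ((liso_normL a).trans' (h ▸ LIso.rfl _)).trans' (liso_normL b).symm'⟩

theorem normL_idem (t : LBT) : normL (normL t) = normL t :=
  (normL_eq_of_liso (liso_normL t)).symm

theorem labels_normL (t : LBT) : labelsLT (normL t) = labelsLT t :=
  (labels_iso (liso_normL t)).symm

theorem shape_normL (t : LBT) : shapeLT (normL t) = normBT (shapeLT t) := by
  induction t with
  | leaf k => rfl
  | node l r ihl ihr =>
      simp only [normL, normBT, shapeLT]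
      have hsl : skey (normL l) = enc (normBT (shapeLT l)) := by
        rw [skey, ihl, normBT_idem]
      have hsr : skey (normL r) = enc (normBT (shapeLT r)) := by
        rw [skey, ihr, normBT_idem]
      by_cases hE : enc (normBT (shapeLT l)) = enc (normBT (shapeLT r))
      · have hS : normBT (shapeLT l) = normBT (shapeLT r) := enc_inj _ _ hE
        split <;> split <;> simp [shapeLT, ihl, ihr, hS]
      · rcases Nat.lt_or_ge (enc (normBT (shapeLT l))) (enc (normBT (shapeLT r))) with hlt | hge
        · rw [if_pos (show cmpL (normL l) (normL r) from Or.inl (by rw [hsl, hsr]; omega)),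
            if_pos hlt.le]
          simp [shapeLT, ihl, ihr]
        · have hgt : enc (normBT (shapeLT r)) < enc (normBT (shapeLT l)) :=
            lt_of_le_of_ne hge (Ne.symm hE)
          rw [if_neg (show ¬ cmpL (normL l) (normL r) from by
              unfold cmpL; rw [hsl, hsr]; omega), if_neg (by omega)]
          simp [shapeLT, ihl, ihr]

theorem normL_node_fix {x y : LBT} (h : normL (.node x y) = .node x y) :
    normL x = x ∧ normL y = y ∧ cmpL x y := by
  simp only [normL] at h
  split at h
  · rename_i hc
    injection h with h1 h2
    rw [h1, h2] at hc
    exact ⟨h1, h2, hc⟩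
  · rename_i hc
    injection h with h1 h2
    exfalso
    have hba : y = x := by
      calc y = normL x := h2.symm
        _ = normL (normL x) := (normL_idem x).symm
        _ = normL y := by rw [h2]
        _ = x := h1
    rw [h1, h2, hba] at hc
    exact hc (cmpL_refl _)
theorem leavesBT_pos (t : BT) : 1 ≤ leavesBT t := by
  induction t with
  | leaf => exact le_rfl
  | node l r ihl ihr => simp [leavesBT]; omega

theorem card_labelsLT (t : LBT) : Multiset.card (labelsLT t) = leavesBT (shapeLT t) := by
  induction t with
  | leaf k => rfl
  | node l r ihl ihr => simp [labelsLT, shapeLT, leavesBT, ihl, ihr]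

/-- All plane binary trees with `n` leaves. -/
def allBTL : ℕ → List BT
  | 0 => []
  | 1 => [.leaf]
  | n + 2 =>
      (List.range (n + 1)).attach.flatMap fun k =>
        (allBTL (k.1 + 1)).flatMap fun l =>
          (allBTL (n + 1 - k.1)).map (.node l)
  decreasing_by
  · have := List.mem_range.mp k.2; omega
  · have := List.mem_range.mp k.2; omega

theorem mem_allBTL {t : BT} {n : ℕ} : t ∈ allBTL n ↔ leavesBT t = n := by
  induction t generalizing n with
  | leaf =>
      constructor
      · intro h
        match n, h with
        | 1, _ => rfl
        | 0, h => simp [allBTL] at h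
        | (n+2), h =>
            simp only [allBTL, List.mem_flatMap, List.mem_map, List.mem_attach] at h
            obtain ⟨k, -, l, -, m, -, hm⟩ := h
            exact absurd hm (by simp)
      · rintro rfl; simp [allBTL, leavesBT]
  | node l r ihl ihr =>
      constructor
      · intro h
        match n, h with
        | 0, h => simp [allBTL] at h
        | 1, h => simp [allBTL] at h
        | (n+2), h =>
            simp only [allBTL, List.mem_flatMap, List.mem_map, List.mem_attach, true_and] at h
            obtain ⟨k, l', hl', m, hm, heq⟩ := h
            cases heq
            have h1 := ihl.mp hl'
            have h2 := ihr.mp hm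
            have hk := List.mem_range.mp k.2
            simp only [leavesBT, h1, h2]
            omega
      · intro h
        simp only [leavesBT] at h
        have h1 := leavesBT_pos l
        have h2 := leavesBT_pos r
        have hn : n = (leavesBT l + leavesBT r - 2) + 2 := by omega
        rw [hn]
        simp only [allBTL, List.mem_flatMap, List.mem_map, List.mem_attach, true_and]
        refine ⟨⟨leavesBT l - 1, List.mem_range.mpr (by omega)⟩, l,
          ihl.mpr (show leavesBT l = (leavesBT l - 1) + 1 by omega), r,
          ihr.mpr (show leavesBT r = (leavesBT l + leavesBT r - 2) + 1 - (leavesBT l - 1) by omega),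
          rfl⟩

/-- Fill a plane shape with labels from a list, returning the rest of the list. -/
def fill : BT → List ℕ → LBT × List ℕ
  | .leaf, [] => (.leaf 0, [])
  | .leaf, k :: ks => (.leaf k, ks)
  | .node l r, ks =>
      let p := fill l ks
      let q := fill r p.2
      (.node p.1 q.1, q.2)

/-- Left-to-right list of leaf labels. -/
def flat : LBT → List ℕ
  | .leaf k => [k]
  | .node l r => flat l ++ flat r

theorem fill_flat (t : LBT) : ∀ rest, fill (shapeLT t) (flat t ++ rest) = (t, rest) := by
  induction t with
  | leaf k => intro rest; rfl
  | node l r ihl ihr =>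
      intro rest
      simp only [shapeLT, flat, fill, List.append_assoc, ihl, ihr]

theorem labels_eq_flat (t : LBT) : labelsLT t = (flat t : Multiset ℕ) := by
  induction t with
  | leaf k => rfl
  | node l r ihl ihr => simp [labelsLT, flat, ihl, ihr]

/-- A finite list covering all labeled trees with given leaf count and label list. -/
def allLBTL (n : ℕ) (L : List ℕ) : List LBT :=
  (allBTL n).flatMap fun s => L.permutations.map fun p => (fill s p).1

theorem mem_allLBTL {t : LBT} {L : List ℕ} (h : labelsLT t = (L : Multiset ℕ)) :
    t ∈ allLBTL L.length L := by
  simp only [allLBTL, List.mem_flatMap, List.mem_map]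
  refine ⟨shapeLT t, ?_, flat t, ?_, ?_⟩
  · rw [mem_allBTL, ← card_labelsLT, h]
    simp
  · rw [List.mem_permutations, ← Multiset.coe_eq_coe, ← labels_eq_flat, h]
  · have := fill_flat t []
    rw [List.append_nil] at this
    rw [this]
/-- The finset of canonical (normal) shapes with `n` leaves. -/
def shapes (n : ℕ) : Finset BT :=
  (allBTL n).toFinset.filter fun t => normBT t = t

theorem mem_shapes {s : BT} {n : ℕ} : s ∈ shapes n ↔ normBT s = s ∧ leavesBT s = n := by
  simp [shapes, mem_allBTL, and_comm]

/-- The finset of canonical labeled trees with shape `s` and label multiset `M`. -/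
noncomputable def fiber (s : BT) (M : Multiset ℕ) : Finset LBT :=
  (allLBTL (Multiset.card M) M.toList).toFinset.filter fun t =>
    normL t = t ∧ shapeLT t = s ∧ labelsLT t = M

theorem mem_fiber {t : LBT} {s : BT} {M : Multiset ℕ} :
    t ∈ fiber s M ↔ normL t = t ∧ shapeLT t = s ∧ labelsLT t = M := by
  simp only [fiber, Finset.mem_filter, List.mem_toFinset, and_iff_right_iff_imp]
  rintro ⟨-, -, h⟩
  have := mem_allLBTL (t := t) (L := M.toList) (by rw [h, Multiset.coe_toList])
  rwa [Multiset.length_toList] at this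

/-- The finset of canonical labeled trees with label multiset `M`. -/
noncomputable def ltrees (M : Multiset ℕ) : Finset LBT :=
  (allLBTL (Multiset.card M) M.toList).toFinset.filter fun t =>
    normL t = t ∧ labelsLT t = M

theorem mem_ltrees {t : LBT} {M : Multiset ℕ} :
    t ∈ ltrees M ↔ normL t = t ∧ labelsLT t = M := by
  simp only [ltrees, Finset.mem_filter, List.mem_toFinset, and_iff_right_iff_imp]
  rintro ⟨-, h⟩
  have := mem_allLBTL (t := t) (L := M.toList) (by rw [h, Multiset.coe_toList])
  rwa [Multiset.length_toList] at this

theorem shape_of_normal {t : LBT} (h : normL t = t) : normBT (shapeLT t) = shapeLT t := by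
  conv_rhs => rw [← h]
  rw [shape_normL]

theorem ltrees_eq_biUnion (M : Multiset ℕ) :
    ltrees M = (shapes (Multiset.card M)).biUnion fun s => fiber s M := by
  ext t
  simp only [mem_ltrees, Finset.mem_biUnion, mem_fiber, mem_shapes]
  constructor
  · rintro ⟨h1, h2⟩
    exact ⟨shapeLT t, ⟨shape_of_normal h1, by rw [← card_labelsLT, h2]⟩, h1, rfl, h2⟩
  · rintro ⟨s, -, h1, -, h2⟩
    exact ⟨h1, h2⟩

theorem fiber_disj (M : Multiset ℕ) :
    (shapes (Multiset.card M) : Set BT).PairwiseDisjoint fun s => fiber s M := by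
  intro a _ b _ hab
  simp only [Function.onFun, Finset.disjoint_left]
  intro t ht ht'
  rw [mem_fiber] at ht ht'
  exact hab (ht.2.1.symm.trans ht'.2.1)
theorem node_injective : Function.Injective fun p : LBT × LBT => LBT.node p.1 p.2 := by
  rintro ⟨a, b⟩ ⟨c, d⟩ h
  injection h with h1 h2
  simp_all

theorem labels_card_pos (x : LBT) : 0 < Multiset.card (labelsLT x) := by
  rw [card_labelsLT]; exact leavesBT_pos _

theorem fiber_card_mul : ∀ s : BT, normBT s = s → ∀ M : Multiset ℕ, M.Nodup →
    Multiset.card M = leavesBT s →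
    (fiber s M).card * 2 ^ symBT s = (leavesBT s).factorial
  | .leaf, _, M, hnd, hcard => by
      simp only [leavesBT] at hcard ⊢
      obtain ⟨k, rfl⟩ := Multiset.card_eq_one.mp hcard
      have hfe : fiber BT.leaf {k} = {LBT.leaf k} := by
        ext t
        simp only [mem_fiber, Finset.mem_singleton]
        constructor
        · rintro ⟨h1, h2, h3⟩
          cases t with
          | leaf j =>
              simp only [labelsLT, Multiset.singleton_inj] at h3
              rw [h3]
          | node l r => exact absurd h2 (by simp [shapeLT])
        · rintro rfl
          exact ⟨rfl, rfl, rfl⟩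
      rw [hfe]
      simp [symBT, Nat.factorial]
  | .node a b, hs, M, hnd, hcard => by
      obtain ⟨hna, hnb, hab⟩ := normBT_node_fix hs
      have hkapos := leavesBT_pos a
      have hkbpos := leavesBT_pos b
      simp only [leavesBT] at hcard ⊢
      set P : Finset (LBT × LBT) :=
        (M.toFinset.powersetCard (leavesBT a)).biUnion
          (fun A => fiber a A.val ×ˢ fiber b (M - A.val)) with hP
      have hMval : M.toFinset.val = M := by
        rw [Multiset.toFinset_val, Multiset.dedup_eq_self.mpr hnd]
      have hMcard : M.toFinset.card = leavesBT a + leavesBT b := by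
        rw [Finset.card_def, hMval, hcard]
      have hmemP : ∀ x y : LBT, (x, y) ∈ P ↔
          (normL x = x ∧ normL y = y ∧ shapeLT x = a ∧ shapeLT y = b ∧
           labelsLT x + labelsLT y = M) := by
        intro x y
        simp only [hP, Finset.mem_biUnion, Finset.mem_product, Finset.mem_powersetCard]
        constructor
        · rintro ⟨A, ⟨hAsub, hAcard⟩, hx, hy⟩
          obtain ⟨h1, h2, h3⟩ := mem_fiber.mp hx
          obtain ⟨h4, h5, h6⟩ := mem_fiber.mp hy
          have hle : A.val ≤ M := by rw [← hMval]; exact Finset.val_le_iff.mpr hAsub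
          refine ⟨h1, h4, h2, h5, ?_⟩
          rw [h3, h6, add_tsub_cancel_of_le hle]
        · rintro ⟨h1, h2, h3, h4, h5⟩
          have hxle : labelsLT x ≤ M := le_iff_exists_add.mpr ⟨labelsLT y, h5.symm⟩
          have hxnd : (labelsLT x).Nodup := Multiset.nodup_of_le hxle hnd
          refine ⟨(labelsLT x).toFinset, ⟨?_, ?_⟩, ?_, ?_⟩
          · rw [← Finset.val_le_iff, hMval, Multiset.toFinset_val,
              Multiset.dedup_eq_self.mpr hxnd]
            exact hxle
          · rw [Finset.card_def, Multiset.toFinset_val, Multiset.dedup_eq_self.mpr hxnd,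
              card_labelsLT, h3]
          · rw [mem_fiber, Multiset.toFinset_val, Multiset.dedup_eq_self.mpr hxnd]
            exact ⟨h1, h3, rfl⟩
          · rw [mem_fiber, Multiset.toFinset_val, Multiset.dedup_eq_self.mpr hxnd, ← h5,
              add_tsub_cancel_left]
            exact ⟨h2, h4, rfl⟩
      have hfib : fiber (.node a b) M
          = (P.filter fun p => cmpL p.1 p.2).image fun p => LBT.node p.1 p.2 := by
        ext t
        simp only [Finset.mem_image, Finset.mem_filter, mem_fiber]
        constructor
        · rintro ⟨h1, h2, h3⟩
          cases t with
          | leaf k => exact absurd h2 (by simp [shapeLT])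
          | node x y =>
              simp only [shapeLT] at h2
              injection h2 with h2a h2b
              obtain ⟨hx, hy, hcmp⟩ := normL_node_fix h1
              exact ⟨(x, y), ⟨(hmemP x y).mpr ⟨hx, hy, h2a, h2b, h3⟩, hcmp⟩, rfl⟩
        · rintro ⟨⟨x, y⟩, ⟨hp, hcmp⟩, rfl⟩
          obtain ⟨h1, h2, h3, h4, h5⟩ := (hmemP x y).mp hp
          refine ⟨?_, ?_, ?_⟩
          · simp only [normL, h1, h2, if_pos hcmp]
          · simp only [shapeLT, h3, h4]
          · simpa [labelsLT] using h5
      have hcard_img : (fiber (.node a b) M).card = (P.filter fun p => cmpL p.1 p.2).card := by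
        rw [hfib, Finset.card_image_of_injective _ node_injective]
      have hdisj : ∀ A ∈ M.toFinset.powersetCard (leavesBT a),
          ∀ B ∈ M.toFinset.powersetCard (leavesBT a), A ≠ B →
          Disjoint (fiber a A.val ×ˢ fiber b (M - A.val)) (fiber a B.val ×ˢ fiber b (M - B.val)) := by
        intro A _ B _ hAB
        rw [Finset.disjoint_left]
        rintro ⟨x, y⟩ hx hy
        rw [Finset.mem_product] at hx hy
        apply hAB
        apply Finset.val_injective
        rw [← (mem_fiber.mp hx.1).2.2, ← (mem_fiber.mp hy.1).2.2]
      have hPcard : P.card = ∑ A ∈ M.toFinset.powersetCard (leavesBT a),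
          (fiber a A.val).card * (fiber b (M - A.val)).card := by
        rw [hP, Finset.card_biUnion hdisj]
        exact Finset.sum_congr rfl fun A _ => Finset.card_product _ _
      have hterm : ∀ A ∈ M.toFinset.powersetCard (leavesBT a),
          (fiber a A.val).card * 2 ^ symBT a = (leavesBT a).factorial ∧
          (fiber b (M - A.val)).card * 2 ^ symBT b = (leavesBT b).factorial := by
        intro A hA
        rw [Finset.mem_powersetCard] at hA
        have hle : A.val ≤ M := by rw [← hMval]; exact Finset.val_le_iff.mpr hA.1
        have h1 : (A.val).Nodup := Multiset.nodup_of_le hle hnd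
        have hcA : Multiset.card A.val = leavesBT a := by rw [← Finset.card_def]; exact hA.2
        have h2 : (M - A.val).Nodup := Multiset.nodup_of_le tsub_le_self hnd
        have hcB : Multiset.card (M - A.val) = leavesBT b := by
          rw [Multiset.card_sub hle, hcard, hcA]
          omega
        exact ⟨fiber_card_mul a hna A.val h1 hcA, fiber_card_mul b hnb (M - A.val) h2 hcB⟩
      by_cases hEq : a = b
      · subst hEq
        have hsym : symBT (.node a a) = symBT a + symBT a + 1 := by
          simp [symBT, if_pos (Iso.rfl a)]
        have hPswap : ∀ x y, (x, y) ∈ P → (y, x) ∈ P := by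
          intro x y hxy
          rw [hmemP] at hxy ⊢
          obtain ⟨h1, h2, h3, h4, h5⟩ := hxy
          exact ⟨h2, h1, h4, h3, by rw [add_comm]; exact h5⟩
        have hne : ∀ x y : LBT, (x, y) ∈ P → x ≠ y := by
          intro x y hxy heq
          obtain ⟨-, -, -, -, h5⟩ := (hmemP x y).mp hxy
          subst heq
          obtain ⟨e, he⟩ := Multiset.card_pos_iff_exists_mem.mp (labels_card_pos x)
          have h6 := Multiset.nodup_iff_count_le_one.mp hnd e
          rw [← h5, Multiset.count_add] at h6
          have := Multiset.count_pos.mpr he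
          omega
        have hhalf : (P.filter fun p => cmpL p.1 p.2).card
            = (P.filter fun p => ¬ cmpL p.1 p.2).card := by
          refine Finset.card_bij' (fun p _ => (p.2, p.1)) (fun p _ => (p.2, p.1)) ?_ ?_ ?_ ?_
          · rintro ⟨x, y⟩ hp
            rw [Finset.mem_filter] at hp ⊢
            exact ⟨hPswap _ _ hp.1, fun hc => hne _ _ hp.1 (cmpL_antisymm hp.2 hc)⟩
          · rintro ⟨x, y⟩ hp
            rw [Finset.mem_filter] at hp ⊢
            exact ⟨hPswap _ _ hp.1, (cmpL_total x y).resolve_left hp.2⟩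
          · rintro ⟨x, y⟩ _; rfl
          · rintro ⟨x, y⟩ _; rfl
        have h2card : 2 * (P.filter fun p => cmpL p.1 p.2).card = P.card := by
          rw [two_mul]
          nth_rewrite 2 [hhalf]
          exact Finset.card_filter_add_card_filter_not _
        have hfact := Nat.choose_mul_factorial_mul_factorial
          (show leavesBT a ≤ leavesBT a + leavesBT a by omega)
        rw [show leavesBT a + leavesBT a - leavesBT a = leavesBT a by omega] at hfact
        calc (fiber (.node a a) M).card * 2 ^ symBT (.node a a)
            = 2 * (P.filter fun p => cmpL p.1 p.2).card
              * (2 ^ symBT a * 2 ^ symBT a) := by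
              rw [hcard_img, hsym]; ring
          _ = P.card * (2 ^ symBT a * 2 ^ symBT a) := by rw [h2card]
          _ = ∑ A ∈ M.toFinset.powersetCard (leavesBT a),
                ((fiber a A.val).card * 2 ^ symBT a)
                * ((fiber a (M - A.val)).card * 2 ^ symBT a) := by
              rw [hPcard, Finset.sum_mul]
              exact Finset.sum_congr rfl fun A _ => by ring
          _ = ∑ A ∈ M.toFinset.powersetCard (leavesBT a),
                (leavesBT a).factorial * (leavesBT a).factorial :=
              Finset.sum_congr rfl fun A hA => by rw [(hterm A hA).1, (hterm A hA).2]
          _ = (leavesBT a + leavesBT a).choose (leavesBT a)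
              * ((leavesBT a).factorial * (leavesBT a).factorial) := by
              rw [Finset.sum_const, Finset.card_powersetCard, hMcard, smul_eq_mul]
          _ = (leavesBT a + leavesBT a).factorial := by rw [← hfact]; ring
      · have hsym : symBT (.node a b) = symBT a + symBT b := by
          simp only [symBT]
          rw [if_neg, add_zero]
          intro hIso
          exact hEq (hna.symm.trans ((normBT_eq_of_iso hIso).trans hnb))
        have hencab : enc a < enc b := lt_of_le_of_ne hab fun h => hEq (enc_inj _ _ h)
        have hfull : P.filter (fun p => cmpL p.1 p.2) = P := by
          apply Finset.filter_true_of_mem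
          rintro ⟨x, y⟩ hp
          obtain ⟨-, -, h3, h4, -⟩ := (hmemP x y).mp hp
          exact Or.inl (by rw [skey, skey, h3, h4, hna, hnb]; exact hencab)
        have hfact := Nat.choose_mul_factorial_mul_factorial
          (show leavesBT a ≤ leavesBT a + leavesBT b by omega)
        rw [show leavesBT a + leavesBT b - leavesBT a = leavesBT b by omega] at hfact
        calc (fiber (.node a b) M).card * 2 ^ symBT (.node a b)
            = P.card * (2 ^ symBT a * 2 ^ symBT b) := by
              rw [hcard_img, hfull, hsym]; ring
          _ = ∑ A ∈ M.toFinset.powersetCard (leavesBT a),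
                ((fiber a A.val).card * 2 ^ symBT a)
                * ((fiber b (M - A.val)).card * 2 ^ symBT b) := by
              rw [hPcard, Finset.sum_mul]
              exact Finset.sum_congr rfl fun A _ => by ring
          _ = ∑ A ∈ M.toFinset.powersetCard (leavesBT a),
                (leavesBT a).factorial * (leavesBT b).factorial :=
              Finset.sum_congr rfl fun A hA => by rw [(hterm A hA).1, (hterm A hA).2]
          _ = (leavesBT a + leavesBT b).choose (leavesBT a)
              * ((leavesBT a).factorial * (leavesBT b).factorial) := by
              rw [Finset.sum_const, Finset.card_powersetCard, hMcard, smul_eq_mul]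
          _ = (leavesBT a + leavesBT b).factorial := by rw [← hfact]; ring
/-- Sum of inverse symmetry weights over canonical shapes with `n` leaves. -/
noncomputable def Hq (n : ℕ) : ℚ := ∑ s ∈ shapes n, ((2 : ℚ) ^ symBT s)⁻¹

theorem shapes_one : shapes 1 = {BT.leaf} := by
  ext s
  rw [mem_shapes, Finset.mem_singleton]
  constructor
  · rintro ⟨-, h⟩
    cases s with
    | leaf => rfl
    | node l r =>
        have h1 := leavesBT_pos l
        have h2 := leavesBT_pos r
        simp only [leavesBT] at h
        omega
  · rintro rfl
    exact ⟨rfl, rfl⟩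

theorem Hq_one : Hq 1 = 1 := by
  simp [Hq, shapes_one, symBT]

theorem iso_iff_eq_of_normal {a b : BT} (ha : normBT a = a) (hb : normBT b = b) :
    Iso a b ↔ a = b := by
  rw [iso_iff_normBT, ha, hb]

theorem Hq_rec (n : ℕ) (hn : 2 ≤ n) :
    2 * Hq n = ∑ k ∈ Finset.Icc 1 (n - 1), Hq k * Hq (n - k) := by
  classical
  set Q : Finset (BT × BT) := (Finset.Icc 1 (n - 1)).biUnion
    (fun k => shapes k ×ˢ shapes (n - k)) with hQ
  have hmemQ : ∀ p : BT × BT, p ∈ Q ↔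
      normBT p.1 = p.1 ∧ normBT p.2 = p.2 ∧ leavesBT p.1 + leavesBT p.2 = n := by
    rintro ⟨x, y⟩
    simp only [hQ, Finset.mem_biUnion, Finset.mem_product, mem_shapes, Finset.mem_Icc]
    constructor
    · rintro ⟨k, hk, ⟨h1, h2⟩, h3, h4⟩
      refine ⟨h1, h3, ?_⟩
      rw [h2, h4]
      omega
    · rintro ⟨h1, h2, h3⟩
      have := leavesBT_pos x
      have := leavesBT_pos y
      exact ⟨leavesBT x, ⟨by omega, by omega⟩, ⟨h1, rfl⟩, h2, by omega⟩
  set u : BT × BT → ℚ := fun p => ((2 : ℚ) ^ (symBT p.1 + symBT p.2))⁻¹ with hu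
  -- decomposition of shapes n as an image
  have himg : shapes n = ((Q.filter fun p => enc p.1 ≤ enc p.2).image
      fun p => BT.node p.1 p.2) := by
    ext s
    rw [mem_shapes]
    simp only [Finset.mem_image, Finset.mem_filter]
    constructor
    · rintro ⟨h1, h2⟩
      cases s with
      | leaf => simp only [leavesBT] at h2; omega
      | node x y =>
          obtain ⟨ha, hb, hc⟩ := normBT_node_fix h1
          simp only [leavesBT] at h2
          exact ⟨(x, y), ⟨(hmemQ _).mpr ⟨ha, hb, h2⟩, hc⟩, rfl⟩
    · rintro ⟨⟨x, y⟩, ⟨hq, hc⟩, rfl⟩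
      obtain ⟨h1, h2, h3⟩ := (hmemQ _).mp hq
      constructor
      · simp only [normBT, h1, h2, if_pos hc]
      · simpa [leavesBT] using h3
  have hinj : Set.InjOn (fun p : BT × BT => BT.node p.1 p.2)
      ↑(Q.filter fun p => enc p.1 ≤ enc p.2) := fun p _ q _ h => by
    rcases p with ⟨a, b⟩; rcases q with ⟨c, d⟩
    injection h with h1 h2
    simp_all
  have hsum_shapes : ∑ s ∈ shapes n, ((2 : ℚ) ^ symBT s)⁻¹
      = ∑ p ∈ Q.filter fun p => enc p.1 ≤ enc p.2,
          ((2 : ℚ) ^ symBT (BT.node p.1 p.2))⁻¹ := by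
    rw [himg, Finset.sum_image hinj]
  -- term values
  have hval_ne : ∀ p : BT × BT, p ∈ Q → p.1 ≠ p.2 →
      ((2 : ℚ) ^ symBT (BT.node p.1 p.2))⁻¹ = u p := by
    rintro ⟨x, y⟩ hq hne
    obtain ⟨h1, h2, -⟩ := (hmemQ _).mp hq
    simp only [symBT, hu]
    rw [if_neg fun hI => hne ((iso_iff_eq_of_normal h1 h2).mp hI), add_zero]
  have hval_eq : ∀ p : BT × BT, p ∈ Q → p.1 = p.2 →
      ((2 : ℚ) ^ symBT (BT.node p.1 p.2))⁻¹ = u p / 2 := by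
    rintro ⟨x, y⟩ hq hne
    obtain ⟨h1, h2, -⟩ := (hmemQ _).mp hq
    simp only [symBT, hu]
    rw [if_pos ((iso_iff_eq_of_normal h1 h2).mpr hne), pow_succ, mul_inv, div_eq_mul_inv]
  -- the three filters
  set A := Q.filter fun p : BT × BT => enc p.1 < enc p.2 with hA
  set B := Q.filter fun p : BT × BT => enc p.1 = enc p.2 with hB
  set C := Q.filter fun p : BT × BT => enc p.2 < enc p.1 with hC
  have hABu : ∑ p ∈ Q.filter (fun p => enc p.1 ≤ enc p.2),
      ((2 : ℚ) ^ symBT (BT.node p.1 p.2))⁻¹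
      = ∑ p ∈ A, u p + ∑ p ∈ B, u p / 2 := by
    rw [← Finset.sum_filter_add_sum_filter_not (Q.filter fun p => enc p.1 ≤ enc p.2)
      (fun p => enc p.1 < enc p.2)]
    congr 1
    · rw [Finset.filter_filter]
      have : (Q.filter fun p : BT × BT => enc p.1 ≤ enc p.2 ∧ enc p.1 < enc p.2) = A := by
        rw [hA]; apply Finset.filter_congr; intro p _; constructor <;> intro h <;> omega
      rw [this]
      apply Finset.sum_congr rfl
      intro p hp
      rw [hA, Finset.mem_filter] at hp
      exact hval_ne p hp.1 fun he => by rw [he] at hp; omega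
    · rw [Finset.filter_filter]
      have : (Q.filter fun p : BT × BT => enc p.1 ≤ enc p.2 ∧ ¬ enc p.1 < enc p.2) = B := by
        rw [hB]; apply Finset.filter_congr; intro p _; constructor <;> intro h <;> omega
      rw [this]
      apply Finset.sum_congr rfl
      intro p hp
      rw [hB, Finset.mem_filter] at hp
      exact hval_eq p hp.1 (enc_inj _ _ hp.2)
  have hQsplit : ∑ p ∈ Q, u p = ∑ p ∈ A, u p + ∑ p ∈ B, u p + ∑ p ∈ C, u p := by
    rw [← Finset.sum_filter_add_sum_filter_not Q (fun p => enc p.1 < enc p.2) u, ← hA]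
    rw [← Finset.sum_filter_add_sum_filter_not (Q.filter fun p => ¬ enc p.1 < enc p.2)
      (fun p => enc p.1 = enc p.2) u]
    rw [Finset.filter_filter, Finset.filter_filter]
    have e1 : (Q.filter fun p : BT × BT => ¬ enc p.1 < enc p.2 ∧ enc p.1 = enc p.2) = B := by
      rw [hB]; apply Finset.filter_congr; intro p _; constructor <;> intro h <;> omega
    have e2 : (Q.filter fun p : BT × BT => ¬ enc p.1 < enc p.2 ∧ ¬ enc p.1 = enc p.2) = C := by
      rw [hC]; apply Finset.filter_congr; intro p _; constructor <;> intro h <;> omega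
    rw [e1, e2, add_assoc]
  have hAC : ∑ p ∈ A, u p = ∑ p ∈ C, u p := by
    apply Finset.sum_nbij' (fun p => (p.2, p.1)) (fun p => (p.2, p.1))
    · rintro ⟨x, y⟩ hp
      rw [hA, Finset.mem_filter] at hp
      rw [hC, Finset.mem_filter]
      refine ⟨?_, hp.2⟩
      rw [hmemQ] at hp ⊢
      obtain ⟨⟨h1, h2, h3⟩, -⟩ := hp
      dsimp only at h1 h2 h3 ⊢
      exact ⟨h2, h1, by omega⟩
    · rintro ⟨x, y⟩ hp
      rw [hC, Finset.mem_filter] at hp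
      rw [hA, Finset.mem_filter]
      refine ⟨?_, hp.2⟩
      rw [hmemQ] at hp ⊢
      obtain ⟨⟨h1, h2, h3⟩, -⟩ := hp
      dsimp only at h1 h2 h3 ⊢
      exact ⟨h2, h1, by omega⟩
    · rintro ⟨x, y⟩ _; rfl
    · rintro ⟨x, y⟩ _; rfl
    · rintro ⟨x, y⟩ _; simp only [hu]; rw [add_comm]
  -- product form of the Q-sum
  have hQprod : ∑ p ∈ Q, u p = ∑ k ∈ Finset.Icc 1 (n - 1), Hq k * Hq (n - k) := by
    rw [hQ, Finset.sum_biUnion]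
    · apply Finset.sum_congr rfl
      intro k hk
      rw [Finset.sum_product, Hq, Hq, Finset.sum_mul_sum]
      apply Finset.sum_congr rfl; intro x _
      apply Finset.sum_congr rfl; intro y _
      simp only [hu]
      rw [pow_add, mul_inv]
    · intro k hk l hl hkl
      simp only [Function.onFun, Finset.disjoint_left]
      rintro ⟨x, y⟩ hx hy
      rw [Finset.mem_product, mem_shapes] at hx hy
      exact hkl (hx.1.2.symm.trans hy.1.2)
  -- conclude
  have hB2 : 2 * (∑ p ∈ B, u p / 2) = ∑ p ∈ B, u p := by
    rw [← Finset.sum_div]; ring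
  calc 2 * Hq n = 2 * (∑ p ∈ A, u p) + 2 * (∑ p ∈ B, u p / 2) := by
        rw [Hq, hsum_shapes, hABu]; ring
    _ = ∑ p ∈ A, u p + ∑ p ∈ C, u p + ∑ p ∈ B, u p := by
        rw [hB2, two_mul]
        nth_rewrite 2 [hAC]
        ring
    _ = ∑ p ∈ Q, u p := by rw [hQsplit]; ring
    _ = ∑ k ∈ Finset.Icc 1 (n - 1), Hq k * Hq (n - k) := hQprod

theorem Hq_eq_catalan : ∀ n : ℕ, 1 ≤ n → Hq n = (catalan (n - 1) : ℚ) / 2 ^ (n - 1) := by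
  intro n
  induction n using Nat.strong_induction_on with
  | _ n ih =>
    intro hn
    rcases Nat.lt_or_ge n 2 with h2 | h2
    · interval_cases n
      simp [Hq_one, catalan_zero]
    · have hrec := Hq_rec n h2
      have hterm : ∀ k ∈ Finset.Icc 1 (n - 1), Hq k * Hq (n - k)
          = ((catalan (k - 1) : ℚ) * catalan (n - k - 1)) / 2 ^ (n - 2) := by
        intro k hk
        rw [Finset.mem_Icc] at hk
        rw [ih k (by omega) (by omega), ih (n - k) (by omega) (by omega)]
        rw [div_mul_div_comm, ← pow_add]
        congr 2
        omega
      rw [Finset.sum_congr rfl hterm, ← Finset.sum_div] at hrec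
      have hcat : ∑ k ∈ Finset.Icc 1 (n - 1), ((catalan (k - 1) : ℚ) * catalan (n - k - 1))
          = (catalan (n - 1) : ℚ) := by
        have h1 : catalan (n - 1) = ∑ i ∈ Finset.range (n - 1),
            catalan i * catalan (n - 2 - i) := by
          have := catalan_succ' (n - 2)
          rw [Finset.Nat.sum_antidiagonal_eq_sum_range_succ_mk] at this
          rw [show n - 1 = (n - 2) + 1 by omega, this]
        rw [h1]
        push_cast
        rw [show Finset.Icc 1 (n - 1) = Finset.Ico 1 n from by
          rw [← Finset.Ico_add_one_right_eq_Icc]; congr 1; omega]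
        rw [Finset.sum_Ico_eq_sum_range]
        apply Finset.sum_congr rfl
        intro i hi
        rw [Finset.mem_range] at hi
        rw [show 1 + i - 1 = i from by omega, show n - (1 + i) - 1 = n - 2 - i from by omega]
      rw [hcat] at hrec
      have h2pos : (2 : ℚ) ^ (n - 2) ≠ 0 := by positivity
      have h2pos' : (2 : ℚ) ^ (n - 1) ≠ 0 := by positivity
      have hpow : (2 : ℚ) ^ (n - 1) = 2 * 2 ^ (n - 2) := by
        rw [← pow_succ']
        congr 1
        omega
      rw [eq_div_iff h2pos'] at *
      field_simp at hrec ⊢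
      rw [hpow]
      linarith [hrec]
theorem doubleFac_pos : ∀ n, 0 < doubleFac n
  | 0 => Nat.one_pos
  | 1 => Nat.one_pos
  | (n + 2) => Nat.mul_pos (by omega) (doubleFac_pos n)

theorem df_catalan : ∀ m : ℕ, 2 ^ m * doubleFac (2 * m - 1) = (m + 1).factorial * catalan m
  | 0 => by simp [doubleFac]
  | (m + 1) => by
      have key : doubleFac (2 * (m + 1) - 1) = (2 * m + 1) * doubleFac (2 * m - 1) := by
        match m with
        | 0 => simp [doubleFac]
        | (k + 1) =>
            rw [show 2 * (k + 1 + 1) - 1 = (2 * (k + 1) - 1) + 2 from by omega, doubleFac]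
            congr 1
            try omega
      have h1 : (m + 1 + 1).factorial * catalan (m + 1)
          = (m + 1).factorial * Nat.centralBinom (m + 1) := by
        rw [Nat.factorial_succ (m + 1), ← succ_mul_catalan_eq_centralBinom (m + 1)]
        ring
      have ih := df_catalan m
      have hc1 := succ_mul_catalan_eq_centralBinom m
      have hc2 := Nat.succ_mul_centralBinom_succ m
      apply Nat.eq_of_mul_eq_mul_left (show 0 < m + 1 by omega)
      rw [key, h1]
      calc (m + 1) * (2 ^ (m + 1) * ((2 * m + 1) * doubleFac (2 * m - 1)))
          = 2 * (2 * m + 1) * (2 ^ m * doubleFac (2 * m - 1) * (m + 1)) := by ring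
        _ = 2 * (2 * m + 1) * ((m + 1).factorial * catalan m * (m + 1)) := by rw [ih]
        _ = (m + 1).factorial * (2 * (2 * m + 1) * ((m + 1) * catalan m)) := by ring
        _ = (m + 1).factorial * (2 * (2 * m + 1) * Nat.centralBinom m) := by rw [hc1]
        _ = (m + 1).factorial * ((m + 1) * Nat.centralBinom (m + 1)) := by rw [hc2]
        _ = (m + 1) * ((m + 1).factorial * Nat.centralBinom (m + 1)) := by ring

theorem Hq_doubleFac (n : ℕ) (hn : 1 ≤ n) :
    (n.factorial : ℚ) * Hq n = (doubleFac (2 * n - 3) : ℚ) := by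
  rw [Hq_eq_catalan n hn]
  have h := df_catalan (n - 1)
  rw [show n - 1 + 1 = n from by omega, show 2 * (n - 1) - 1 = 2 * n - 3 from by omega] at h
  have h2 : ((2 : ℚ)) ^ (n - 1) ≠ 0 := by positivity
  rw [mul_div_assoc', div_eq_iff h2]
  have hc := congrArg (fun k : ℕ => (k : ℚ)) h
  push_cast at hc
  linear_combination -hc
/-- Canonical representative of an Otter tree. -/
def oRep : Otter → BT := Quotient.lift normBT fun _ _ h => normBT_eq_of_iso h

/-- Canonical representative of a labeled tree class. -/
def lRep : LTree → LBT := Quotient.lift normL fun _ _ h => normL_eq_of_liso h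

theorem mk_oRep (q : Otter) : Quotient.mk btSetoid (oRep q) = q :=
  Quotient.inductionOn q fun t => Quotient.sound (iso_normBT t).symm'

theorem mk_lRep (q : LTree) : Quotient.mk ltSetoid (lRep q) = q :=
  Quotient.inductionOn q fun t => Quotient.sound (liso_normL t).symm'

theorem leaves_oRep (q : Otter) : leavesBT (oRep q) = q.leaves :=
  Quotient.inductionOn q fun t => leaves_normBT t

theorem labels_lRep (q : LTree) : labelsLT (lRep q) = q.labels :=
  Quotient.inductionOn q fun t => labels_normL t

theorem normBT_oRep (q : Otter) : normBT (oRep q) = oRep q :=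
  Quotient.inductionOn q fun t => normBT_idem t

theorem normL_lRep (q : LTree) : normL (lRep q) = lRep q :=
  Quotient.inductionOn q fun t => normL_idem t

theorem shape_eq_iff (q r : LTree) :
    q.shape = r.shape ↔ shapeLT (lRep q) = shapeLT (lRep r) := by
  induction q using Quotient.inductionOn with | _ t =>
  induction r using Quotient.inductionOn with | _ u =>
  show Quotient.mk btSetoid (shapeLT t) = Quotient.mk btSetoid (shapeLT u) ↔
    shapeLT (normL t) = shapeLT (normL u)
  rw [shape_normL, shape_normL, Quotient.eq]
  exact iso_iff_normBT

/-- The equivalence between Otter trees with `n` leaves and canonical shapes. -/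
noncomputable def otterNEquiv (n : ℕ) : OtterN n ≃ {s : BT // s ∈ shapes n} where
  toFun q := ⟨oRep q.1, by
    rw [mem_shapes]
    exact ⟨normBT_oRep _, by rw [leaves_oRep]; exact q.2⟩⟩
  invFun s := ⟨Quotient.mk btSetoid s.1, (mem_shapes.mp s.2).2⟩
  left_inv q := Subtype.ext (mk_oRep q.1)
  right_inv s := Subtype.ext (by
    show oRep (Quotient.mk btSetoid s.1) = s.1
    exact (mem_shapes.mp s.2).1)

/-- The equivalence between phylogenetic trees and canonical labeled trees. -/
noncomputable def phyloEquiv (n : ℕ) :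
    Phylo n ≃ {t : LBT // t ∈ ltrees (Finset.Icc 1 n).val} where
  toFun q := ⟨lRep q.1, by
    rw [mem_ltrees]
    exact ⟨normL_lRep _, by rw [labels_lRep]; exact q.2⟩⟩
  invFun t := ⟨Quotient.mk ltSetoid t.1, (mem_ltrees.mp t.2).2⟩
  left_inv q := Subtype.ext (mk_lRep q.1)
  right_inv t := Subtype.ext (by
    show lRep (Quotient.mk ltSetoid t.1) = t.1
    exact (mem_ltrees.mp t.2).1)

/-- The equivalence between isomorphic pairs of phylogenetic trees and pairs of
canonical labeled trees with equal shapes. -/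
noncomputable def pairEquiv (n : ℕ) :
    {pp : Phylo n × Phylo n // pp.1.1.shape = pp.2.1.shape} ≃
    {p : LBT × LBT //
      p ∈ (ltrees (Finset.Icc 1 n).val ×ˢ ltrees (Finset.Icc 1 n).val).filter
        fun p => shapeLT p.1 = shapeLT p.2} where
  toFun pp := ⟨(lRep pp.1.1.1, lRep pp.1.2.1), by
    rw [Finset.mem_filter, Finset.mem_product]
    exact ⟨⟨((phyloEquiv n) pp.1.1).2, ((phyloEquiv n) pp.1.2).2⟩,
      (shape_eq_iff _ _).mp pp.2⟩⟩
  invFun p :=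
    have hp := p.2
    have h1 : p.1.1 ∈ ltrees (Finset.Icc 1 n).val :=
      (Finset.mem_product.mp (Finset.mem_filter.mp hp).1).1
    have h2 : p.1.2 ∈ ltrees (Finset.Icc 1 n).val :=
      (Finset.mem_product.mp (Finset.mem_filter.mp hp).1).2
    ⟨(⟨Quotient.mk ltSetoid p.1.1, (mem_ltrees.mp h1).2⟩,
      ⟨Quotient.mk ltSetoid p.1.2, (mem_ltrees.mp h2).2⟩), by
      apply (shape_eq_iff _ _).mpr
      show shapeLT (normL p.1.1) = shapeLT (normL p.1.2)
      rw [(mem_ltrees.mp h1).1, (mem_ltrees.mp h2).1]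
      exact (Finset.mem_filter.mp hp).2⟩
  left_inv pp := Subtype.ext (by
    apply Prod.ext <;> apply Subtype.ext
    · exact mk_lRep pp.1.1.1
    · exact mk_lRep pp.1.2.1)
  right_inv p := Subtype.ext (by
    have hp := p.2
    have h1 : p.1.1 ∈ ltrees (Finset.Icc 1 n).val :=
      (Finset.mem_product.mp (Finset.mem_filter.mp hp).1).1
    have h2 : p.1.2 ∈ ltrees (Finset.Icc 1 n).val :=
      (Finset.mem_product.mp (Finset.mem_filter.mp hp).1).2
    apply Prod.ext
    · show lRep (Quotient.mk ltSetoid p.1.1) = p.1.1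
      exact (mem_ltrees.mp h1).1
    · show lRep (Quotient.mk ltSetoid p.1.2) = p.1.2
      exact (mem_ltrees.mp h2).1)

theorem pair_filter_eq (M : Multiset ℕ) :
    ((ltrees M ×ˢ ltrees M).filter fun p => shapeLT p.1 = shapeLT p.2)
      = (shapes (Multiset.card M)).biUnion fun s => fiber s M ×ˢ fiber s M := by
  ext ⟨x, y⟩
  simp only [Finset.mem_filter, Finset.mem_product, Finset.mem_biUnion, mem_ltrees, mem_fiber,
    mem_shapes]
  constructor
  · rintro ⟨⟨⟨h1, h2⟩, h3, h4⟩, h5⟩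
    exact ⟨shapeLT x, ⟨shape_of_normal h1, by rw [← card_labelsLT, h2]⟩,
      ⟨h1, rfl, h2⟩, h3, h5.symm, h4⟩
  · rintro ⟨s, hs, ⟨h1, h2, h3⟩, h4, h5, h6⟩
    exact ⟨⟨⟨h1, h3⟩, h4, h6⟩, h2.trans h5.symm⟩

theorem pair_fiber_disj (M : Multiset ℕ) :
    ∀ a ∈ shapes (Multiset.card M), ∀ b ∈ shapes (Multiset.card M), a ≠ b →
    Disjoint (fiber a M ×ˢ fiber a M) (fiber b M ×ˢ fiber b M) := by
  intro a _ b _ hab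
  rw [Finset.disjoint_left]
  rintro ⟨x, y⟩ hx hy
  rw [Finset.mem_product] at hx hy
  exact hab ((mem_fiber.mp hx.1).2.1.symm.trans (mem_fiber.mp hy.1).2.1)
/-- for `n ≥ 2`, the probability that two uniform random
phylogenetic trees of size `n` are isomorphic equals
`(n!/(2n-3)!!)² · Σ_{t ∈ U_n} (1/4)^{sym t}`. -/
theorem pIso_formula (n : ℕ) (hn : 2 ≤ n) :
    pIso n = ((n.factorial : ℚ) / (doubleFac (2 * n - 3) : ℚ)) ^ 2 *
      ∑ᶠ t : OtterN n, ((1 : ℚ) / 4) ^ t.1.sym := by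
  classical
  set M : Multiset ℕ := (Finset.Icc 1 n).val with hM
  have hnd : M.Nodup := (Finset.Icc 1 n).nodup
  have hcM : Multiset.card M = n := by
    rw [hM, ← Finset.card_def, Nat.card_Icc]
    omega
  have h1n : 1 ≤ n := by omega
  -- fiber cardinalities in ℚ
  have hfib : ∀ s ∈ shapes n, ((fiber s M).card : ℚ)
      = (n.factorial : ℚ) * ((2 : ℚ) ^ symBT s)⁻¹ := by
    intro s hs
    obtain ⟨hns, hls⟩ := mem_shapes.mp hs
    have h := fiber_card_mul s hns M hnd (by rw [hcM, hls])
    rw [hls] at h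
    have h2 : ((2 : ℚ)) ^ symBT s ≠ 0 := by positivity
    have hc := congrArg (fun k : ℕ => (k : ℚ)) h
    push_cast at hc
    field_simp
    linarith [hc]
  -- total count equals the double factorial
  have hcount : ((ltrees M).card : ℚ) = (doubleFac (2 * n - 3) : ℚ) := by
    have hb := ltrees_eq_biUnion M
    rw [hcM] at hb
    rw [hb, Finset.card_biUnion
      (fun a ha b hb' hab => fiber_disj M (by rwa [hcM]) (by rwa [hcM]) hab)]
    push_cast
    rw [Finset.sum_congr rfl hfib, ← Finset.mul_sum]
    exact Hq_doubleFac n h1n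
  have hdf : (doubleFac (2 * n - 3) : ℚ) ≠ 0 :=
    (Nat.cast_pos.mpr (doubleFac_pos _)).ne'
  -- numerator count
  have hc2 : (Nat.card {pp : Phylo n × Phylo n // pp.1.1.shape = pp.2.1.shape} : ℚ)
      = ∑ s ∈ shapes n, ((fiber s M).card : ℚ) ^ 2 := by
    rw [Nat.card_congr (pairEquiv n), Nat.card_eq_finsetCard]
    have hpf := pair_filter_eq M
    rw [hcM] at hpf
    rw [← hM, hpf, Finset.card_biUnion
      (fun a ha b hb' hab => pair_fiber_disj M a (by rwa [hcM]) b (by rwa [hcM]) hab)]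
    rw [show (∑ s ∈ shapes n, (fiber s M ×ˢ fiber s M).card)
        = ∑ s ∈ shapes n, (fiber s M).card * (fiber s M).card from
      Finset.sum_congr rfl fun s _ => Finset.card_product _ _]
    push_cast
    exact Finset.sum_congr rfl fun s _ => (sq _).symm
  -- denominator count
  have hc1 : (Nat.card (Phylo n) : ℚ) = ((ltrees M).card : ℚ) := by
    rw [Nat.card_congr (phyloEquiv n), Nat.card_eq_finsetCard, ← hM]
  -- finsum over Otter trees
  have hfin : ∑ᶠ t : OtterN n, ((1 : ℚ) / 4) ^ t.1.sym
      = ∑ s ∈ shapes n, ((1 : ℚ) / 4) ^ symBT s := by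
    have hFin : Fintype (OtterN n) := Fintype.ofEquiv _ (otterNEquiv n).symm
    rw [finsum_eq_sum_of_fintype]
    rw [← Equiv.sum_comp (otterNEquiv n).symm fun t : OtterN n => ((1 : ℚ) / 4) ^ t.1.sym]
    rw [← Finset.sum_coe_sort (shapes n) fun s => ((1 : ℚ) / 4) ^ symBT s]
    exact Finset.sum_congr rfl fun s _ => rfl
  -- per-term identity for the weights
  have hq4 : ∀ s : BT, ((1 : ℚ) / 4) ^ symBT s = (((2 : ℚ) ^ symBT s)⁻¹) ^ 2 := by
    intro s
    rw [show ((1 : ℚ) / 4) = ((2 : ℚ)⁻¹) ^ 2 by norm_num, ← pow_mul,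
      mul_comm 2 (symBT s), pow_mul, inv_pow]
  -- conclude
  unfold pIso
  rw [hc2, hc1, hcount, hfin]
  have hLnum : ∑ s ∈ shapes n, ((fiber s M).card : ℚ) ^ 2
      = ∑ s ∈ shapes n, (n.factorial : ℚ) ^ 2 * (((2 : ℚ) ^ symBT s)⁻¹) ^ 2 :=
    Finset.sum_congr rfl fun s hs => by rw [hfib s hs]; ring
  have hRsum : ∑ s ∈ shapes n, ((1 : ℚ) / 4) ^ symBT s
      = ∑ s ∈ shapes n, (((2 : ℚ) ^ symBT s)⁻¹) ^ 2 :=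
    Finset.sum_congr rfl fun s _ => hq4 s
  rw [hLnum, hRsum, ← Finset.mul_sum, div_pow]
  ring
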